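/- Let ℙ be a 0/1 integer linear program min{ f(x) : x ∈ {0,1}^n, g_ℓ(x) ≥ 0 for ℓ ∈ [m] } with m ≥ 1 non-redundant affine-linear constraints and at least one integral feasible point, and let f(x_{I*}) denote its integral optimum. If there exists y feasible for Las_{n−1}(ℙ) with Σ_{I⊆N} y_I^N f(x_I) < f(x_{I*}), then every constraint g_ℓ(x) ≥ 0 of ℙ is a Single Vertex Cutting (SVC) constraint: there is exactly one I ⊆ N with g_ℓ(x_I) < 0, and g_ℓ(x_J) > 0 for every other J ⊆ N. -/

import Mathlib

open Finset Matrix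

/-- Value of the affine-linear function `x ↦ ∑ i, a i * x i + b` at the 0/1 point `x_I`. -/
def gval {n : ℕ} (a : Fin n → ℝ) (b : ℝ) (I : Finset (Fin n)) : ℝ :=
  (∑ i ∈ I, a i) + b

/-- The shift operator: `(g∗y)_I = ∑ i, a i * y_{I ∪ {i}} + b * y_I`. -/
def shiftVec {n : ℕ} (a : Fin n → ℝ) (b : ℝ) (y : Finset (Fin n) → ℝ)
    (I : Finset (Fin n)) : ℝ :=
  (∑ i : Fin n, a i * y (insert i I)) + b * y I

/-- `y_I^N := ∑_{H ⊆ N \ I} (-1)^{|H|} y_{H ∪ I}`. -/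
def mob {n : ℕ} (w : Finset (Fin n) → ℝ) (I : Finset (Fin n)) : ℝ :=
  ∑ H ∈ (Finset.univ \ I).powerset, (-1 : ℝ) ^ H.card * w (H ∪ I)

/-- The index set `P_{n-1}(N)`: all subsets of `N = {1,...,n}` except `N` itself. -/
abbrev Idx (n : ℕ) := {I : Finset (Fin n) // I ≠ Finset.univ}

/-- The `(n-1)`-moment matrix of `w`, with `(I,J)`-entry `w_{I ∪ J}`. -/
def Mnm1 {n : ℕ} (w : Finset (Fin n) → ℝ) : Matrix (Idx n) (Idx n) ℝ :=
  Matrix.of fun I J => w (I.1 ∪ J.1)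

/-- The full `n`-moment matrix of `w`, indexed by all subsets of `N`. -/
def Mfull {n : ℕ} (w : Finset (Fin n) → ℝ) : Matrix (Finset (Fin n)) (Finset (Fin n)) ℝ :=
  Matrix.of fun I J => w (I ∪ J)

namespace SVCaux


variable {n : ℕ}

lemma alt_powerset (D : Finset (Fin n)) :
    ∑ H ∈ D.powerset, (-1 : ℝ) ^ H.card = if D = ∅ then 1 else 0 := by
  have h := Finset.sum_powerset_neg_one_pow_card (x := D)
  have h2 : ((∑ m ∈ D.powerset, (-1 : ℤ) ^ m.card : ℤ) : ℝ)
      = ∑ H ∈ D.powerset, (-1 : ℝ) ^ H.card := by push_cast; rfl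
  rw [← h2, h]
  split_ifs <;> norm_num

/-- The Möbius test vector for `K`. -/
def uvec (K : Finset (Fin n)) : Finset (Fin n) → ℝ :=
  fun I => if K ⊆ I then (-1 : ℝ) ^ (I \ K).card else 0

lemma disj_of_sub_sdiff {H A B : Finset (Fin n)} (h : H ⊆ A \ B) : Disjoint H B :=
  (Finset.subset_sdiff.mp h).2

lemma union_sdiff_self' {H K : Finset (Fin n)} (h : Disjoint H K) : (H ∪ K) \ K = H := by
  rw [Finset.union_sdiff_distrib, Finset.sdiff_self, Finset.union_empty,
    Finset.sdiff_eq_self_of_disjoint h]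

lemma colsum (K T : Finset (Fin n)) :
    (∑ I : Finset (Fin n), if I ⊆ T then uvec K I else 0)
      = if T = K then 1 else 0 := by
  have hterm : ∀ I : Finset (Fin n),
      (if I ⊆ T then uvec K I else 0)
        = if I ∈ T.powerset.filter (K ⊆ ·) then (-1:ℝ)^(I\K).card else 0 := by
    intro I; unfold uvec
    by_cases h1 : I ⊆ T <;> by_cases h2 : K ⊆ I <;>
      simp [h1, h2, Finset.mem_powerset]
  rw [Finset.sum_congr rfl (fun I _ => hterm I), Finset.sum_ite_mem,
    Finset.univ_inter]
  by_cases hKT : K ⊆ T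
  · rw [Finset.sum_nbij' (i := fun I => I \ K) (j := fun H => H ∪ K)
      (t := (T \ K).powerset) (g := fun H => (-1:ℝ)^H.card)
      (fun I hI => by
        simp only [Finset.mem_filter, Finset.mem_powerset] at hI ⊢
        exact Finset.sdiff_subset_sdiff hI.1 (le_refl K))
      (fun H hH => by
        simp only [Finset.mem_filter, Finset.mem_powerset] at hH ⊢
        exact ⟨Finset.union_subset (hH.trans (Finset.sdiff_subset)) hKT,
          Finset.subset_union_right⟩)
      (fun I hI => by
        simp only [Finset.mem_filter, Finset.mem_powerset] at hI
        exact Finset.sdiff_union_of_subset hI.2)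
      (fun H hH => by
        simp only [Finset.mem_powerset] at hH
        exact union_sdiff_self' (disj_of_sub_sdiff hH))
      (fun I hI => rfl), alt_powerset]
    have : T \ K = ∅ ↔ T = K := by
      rw [Finset.sdiff_eq_empty_iff_subset]
      exact ⟨fun h => Finset.Subset.antisymm h hKT, fun h => h ▸ le_refl T⟩
    simp [this]
  · have hTK : T ≠ K := fun h => hKT (h ▸ le_refl T)
    rw [if_neg hTK]
    apply Finset.sum_eq_zero
    intro I hI
    simp only [Finset.mem_filter, Finset.mem_powerset] at hI
    exact absurd (hI.2.trans hI.1) hKT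


variable {n : ℕ}


lemma mob_eq (w : Finset (Fin n) → ℝ) (T : Finset (Fin n)) :
    mob w T = ∑ R : Finset (Fin n), if T ⊆ R then (-1:ℝ)^((R \ T).card) * w R else 0 := by
  rw [← Finset.sum_filter, mob]
  refine Finset.sum_nbij' (i := fun H => H ∪ T) (j := fun R => R \ T)
    (fun H hH => by simp) (fun R hR => by
      simp only [Finset.mem_powerset]
      exact Finset.sdiff_subset_sdiff (Finset.subset_univ R) (le_refl T))
    (fun H hH => by
      simp only [Finset.mem_powerset] at hH
      exact union_sdiff_self' ((Finset.subset_sdiff.mp hH).2))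
    (fun R hR => by
      simp only [Finset.mem_filter] at hR
      exact Finset.sdiff_union_of_subset hR.2)
    (fun H hH => by
      simp only [Finset.mem_powerset] at hH
      rw [union_sdiff_self' ((Finset.subset_sdiff.mp hH).2)])

lemma card_sdiff_split {S T R : Finset (Fin n)} (h1 : S ⊆ T) (h2 : T ⊆ R) :
    (R \ T).card + (T \ S).card = (R \ S).card := by
  rw [Finset.card_sdiff_of_subset h1, Finset.card_sdiff_of_subset h2, Finset.card_sdiff_of_subset (h1.trans h2)]
  have := Finset.card_le_card h1
  have := Finset.card_le_card h2
  omega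

lemma mob_inv (w : Finset (Fin n) → ℝ) (S : Finset (Fin n)) :
    (∑ T : Finset (Fin n), if S ⊆ T then mob w T else 0) = w S := by
  have step1 : ∀ T : Finset (Fin n), (if S ⊆ T then mob w T else 0)
      = ∑ R : Finset (Fin n),
          (if S ⊆ T then (if T ⊆ R then (-1:ℝ)^((R\T).card) * w R else 0) else 0) := by
    intro T; split_ifs with h
    · exact mob_eq w T
    · simp
  rw [Finset.sum_congr rfl fun T _ => step1 T, Finset.sum_comm]
  have inner : ∀ R : Finset (Fin n),
      (∑ T : Finset (Fin n),
          (if S ⊆ T then (if T ⊆ R then (-1:ℝ)^((R\T).card) * w R else 0) else 0))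
        = if R = S then w R else 0 := by
    intro R
    have hterm : ∀ T : Finset (Fin n),
        (if S ⊆ T then (if T ⊆ R then (-1:ℝ)^((R\T).card) * w R else 0) else 0)
          = ((-1:ℝ)^((R\S).card) * w R) * (if T ⊆ R then uvec S T else 0) := by
      intro T
      unfold uvec
      split_ifs with h1 h2 <;> try ring
      have hb : ((-1:ℝ))^((T\S).card) * ((-1:ℝ))^((T\S).card) = 1 := by
        rw [← pow_add, ← two_mul, pow_mul]; norm_num
      rw [show ((R\S).card) = (R\T).card + (T\S).card from (card_sdiff_split h1 h2).symm,
        pow_add]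
      linear_combination (-((-1:ℝ)^((R\T).card) * w R)) * hb
    rw [Finset.sum_congr rfl fun T _ => hterm T, ← Finset.mul_sum, colsum]
    rcases eq_or_ne R S with rfl | h
    · simp
    · simp [h]
  rw [Finset.sum_congr rfl fun R _ => inner R]
  simp

lemma sum_mob (w : Finset (Fin n) → ℝ) : (∑ T : Finset (Fin n), mob w T) = w ∅ := by
  have := mob_inv w ∅
  simpa using this


lemma quad_full (w V : Finset (Fin n) → ℝ) :
    (∑ I : Finset (Fin n), V I * ∑ J : Finset (Fin n), w (I ∪ J) * V J)
      = ∑ T : Finset (Fin n),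
          mob w T * (∑ I : Finset (Fin n), if I ⊆ T then V I else 0)^2 := by
  have step1 : (∑ I : Finset (Fin n), V I * ∑ J : Finset (Fin n), w (I ∪ J) * V J)
      = ∑ I : Finset (Fin n), ∑ J : Finset (Fin n), ∑ T : Finset (Fin n),
          V I * ((if I ∪ J ⊆ T then mob w T else 0) * V J) := by
    refine Finset.sum_congr rfl fun I _ => ?_
    rw [Finset.mul_sum]
    refine Finset.sum_congr rfl fun J _ => ?_
    rw [← mob_inv w (I ∪ J), Finset.sum_mul, Finset.mul_sum]
  rw [step1]
  rw [Finset.sum_congr rfl fun I (_ : I ∈ Finset.univ) =>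
    (Finset.sum_comm (s := Finset.univ) (t := Finset.univ)
      (f := fun J T => V I * ((if I ∪ J ⊆ T then mob w T else 0) * V J)))]
  rw [Finset.sum_comm]
  refine Finset.sum_congr rfl fun T _ => ?_
  have hterm : ∀ I J : Finset (Fin n),
      V I * ((if I ∪ J ⊆ T then mob w T else 0) * V J)
        = mob w T * ((if I ⊆ T then V I else 0) * (if J ⊆ T then V J else 0)) := by
    intro I J
    by_cases h1 : I ⊆ T <;> by_cases h2 : J ⊆ T <;>
      simp [h1, h2, Finset.union_subset_iff] <;> ring
  calc (∑ I : Finset (Fin n), ∑ J : Finset (Fin n),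
          V I * ((if I ∪ J ⊆ T then mob w T else 0) * V J))
      = ∑ I : Finset (Fin n), ∑ J : Finset (Fin n),
          mob w T * ((if I ⊆ T then V I else 0) * (if J ⊆ T then V J else 0)) := by
        exact Finset.sum_congr rfl fun I _ => Finset.sum_congr rfl fun J _ => hterm I J
    _ = mob w T * (∑ I : Finset (Fin n), if I ⊆ T then V I else 0)^2 := by
        rw [sq, Finset.sum_mul_sum, Finset.mul_sum]
        exact Finset.sum_congr rfl fun I _ => by rw [Finset.mul_sum]

lemma sum_idx (f : Finset (Fin n) → ℝ) (hf : f Finset.univ = 0) :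
    (∑ I : Idx n, f I.1) = ∑ I : Finset (Fin n), f I := by
  classical
  rw [← Finset.sum_filter_add_sum_filter_not Finset.univ (fun I => I ≠ Finset.univ) f]
  rw [Finset.sum_subtype (p := fun I => I ≠ Finset.univ)
    (Finset.univ.filter (fun I => I ≠ Finset.univ)) (fun x => by simp) f]
  have : (∑ I ∈ Finset.univ.filter (fun I => ¬ I ≠ Finset.univ), f I) = 0 := by
    apply Finset.sum_eq_zero
    intro I hI
    simp only [Finset.mem_filter, not_not] at hI
    rw [hI.2, hf]
  rw [this, add_zero]

lemma psd_quad {w : Finset (Fin n) → ℝ} (h : (Mnm1 w).PosSemidef)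
    (V : Finset (Fin n) → ℝ) (hV : V Finset.univ = 0) :
    0 ≤ ∑ T : Finset (Fin n),
        mob w T * (∑ I : Finset (Fin n), if I ⊆ T then V I else 0)^2 := by
  have h2 := h.dotProduct_mulVec_nonneg (fun I : Idx n => V I.1)
  rw [← quad_full]
  have hdot : (dotProduct (star fun I : Idx n => V I.1)
        (Mnm1 w *ᵥ fun I : Idx n => V I.1))
      = ∑ I : Finset (Fin n), V I * ∑ J : Finset (Fin n), w (I ∪ J) * V J := by
    rw [dotProduct]
    have inner : ∀ I : Idx n,
        (Mnm1 w *ᵥ fun J : Idx n => V J.1) I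
          = ∑ J : Finset (Fin n), w (I.1 ∪ J) * V J := by
      intro I
      rw [mulVec, dotProduct]
      exact sum_idx (fun J => w (I.1 ∪ J) * V J)
        (show w (I.1 ∪ Finset.univ) * V Finset.univ = 0 by rw [hV, mul_zero])
    calc (∑ I : Idx n, star (V I.1) * (Mnm1 w *ᵥ fun J : Idx n => V J.1) I)
        = ∑ I : Idx n, V I.1 * ∑ J : Finset (Fin n), w (I.1 ∪ J) * V J := by
          refine Finset.sum_congr rfl fun I _ => ?_
          rw [inner I, star_trivial]
      _ = ∑ I : Finset (Fin n), V I * ∑ J : Finset (Fin n), w (I ∪ J) * V J :=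
          sum_idx (fun I => V I * ∑ J : Finset (Fin n), w (I ∪ J) * V J)
            (show V Finset.univ * _ = 0 by rw [hV, zero_mul])
  rw [← hdot]
  exact h2

lemma mob_nonneg {y : Finset (Fin n) → ℝ} (h : (Mfull y).PosSemidef)
    (K : Finset (Fin n)) : 0 ≤ mob y K := by
  have h2 := h.dotProduct_mulVec_nonneg (uvec K)
  have hdot : (dotProduct (star (uvec K)) (Mfull y *ᵥ uvec K))
      = ∑ I : Finset (Fin n), uvec K I * ∑ J : Finset (Fin n), y (I ∪ J) * uvec K J := by
    rw [dotProduct]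
    refine Finset.sum_congr rfl fun I _ => ?_
    rw [mulVec, dotProduct, star_trivial]
    rfl
  rw [hdot, quad_full] at h2
  have : (∑ T : Finset (Fin n),
      mob y T * (∑ I : Finset (Fin n), if I ⊆ T then uvec K I else 0)^2) = mob y K := by
    rw [Finset.sum_congr rfl fun T (_ : T ∈ Finset.univ) => by rw [colsum K T]]
    rw [Finset.sum_congr rfl fun T (_ : T ∈ Finset.univ) =>
      show mob y T * (if T = K then (1:ℝ) else 0)^2 = if T = K then mob y T else 0 by
        split_ifs <;> simp]
    simp
  rw [this] at h2
  exact h2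

lemma inner_shift (aa : Fin n → ℝ) (y : Finset (Fin n) → ℝ) (K : Finset (Fin n)) (i : Fin n) :
    (∑ H ∈ (Finset.univ \ K).powerset, (-1:ℝ)^H.card * y (insert i (H ∪ K)))
      = if i ∈ K then mob y K else 0 := by
  by_cases hi : i ∈ K
  · rw [if_pos hi, mob]
    refine Finset.sum_congr rfl fun H _ => ?_
    rw [Finset.insert_eq_self.2 (Finset.mem_union_right H hi)]
  · rw [if_neg hi]
    have hiD : i ∈ Finset.univ \ K := Finset.mem_sdiff.2 ⟨Finset.mem_univ i, hi⟩
    have hD : Finset.univ \ K = insert i ((Finset.univ \ K).erase i) :=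
      (Finset.insert_erase hiD).symm
    rw [hD, Finset.sum_powerset_insert (Finset.notMem_erase i _)]
    rw [← Finset.sum_add_distrib]
    apply Finset.sum_eq_zero
    intro H hH
    have hiH : i ∉ H := fun hmem =>
      Finset.notMem_erase i _ ((Finset.mem_powerset.1 hH) hmem)
    have hcard : (insert i H).card = H.card + 1 := Finset.card_insert_of_notMem hiH
    have hset : insert i (insert i H ∪ K) = insert i (H ∪ K) := by
      rw [Finset.insert_union, Finset.insert_idem]
    rw [hcard, hset, pow_succ]
    ring

lemma mob_shift (aa : Fin n → ℝ) (bb : ℝ) (y : Finset (Fin n) → ℝ) (K : Finset (Fin n)) :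
    mob (shiftVec aa bb y) K = ((∑ i ∈ K, aa i) + bb) * mob y K := by
  conv_lhs => rw [mob]
  simp only [shiftVec]
  calc (∑ H ∈ (Finset.univ \ K).powerset, (-1:ℝ)^H.card *
        ((∑ i : Fin n, aa i * y (insert i (H ∪ K))) + bb * y (H ∪ K)))
      = (∑ H ∈ (Finset.univ \ K).powerset, ∑ i : Fin n,
          aa i * ((-1:ℝ)^H.card * y (insert i (H ∪ K))))
        + bb * ∑ H ∈ (Finset.univ \ K).powerset, (-1:ℝ)^H.card * y (H ∪ K) := by
        rw [Finset.mul_sum, ← Finset.sum_add_distrib]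
        refine Finset.sum_congr rfl fun H _ => ?_
        rw [mul_add, Finset.mul_sum]
        congr 1
        · exact Finset.sum_congr rfl fun i _ => by ring
        · ring
    _ = (∑ i : Fin n, aa i * ∑ H ∈ (Finset.univ \ K).powerset,
          (-1:ℝ)^H.card * y (insert i (H ∪ K)))
        + bb * ∑ H ∈ (Finset.univ \ K).powerset, (-1:ℝ)^H.card * y (H ∪ K) := by
        rw [Finset.sum_comm]
        congr 1
        exact Finset.sum_congr rfl fun i _ => (Finset.mul_sum _ _ _).symm
    _ = ((∑ i ∈ K, aa i) + bb) * mob y K := by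
        rw [Finset.sum_congr rfl fun i (_ : i ∈ Finset.univ) => by
          rw [inner_shift aa y K i]]
        simp only [mul_ite, mul_zero]
        rw [Finset.sum_ite_mem, Finset.univ_inter, ← Finset.sum_mul, mob]
        ring

/-- `uvec` zeroed out at `univ`. -/
def uvecP (K : Finset (Fin n)) : Finset (Fin n) → ℝ :=
  fun I => if I = Finset.univ then 0 else uvec K I

lemma uvecP_univ : uvecP (Finset.univ : Finset (Fin n)) = fun _ => 0 := by
  funext I
  unfold uvecP uvec
  split_ifs with h1 h2
  · rfl
  · exact absurd (Finset.univ_subset_iff.mp h2) h1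
  · rfl

lemma sigmaP (K T : Finset (Fin n)) (hK : K ≠ Finset.univ) :
    (∑ I : Finset (Fin n), if I ⊆ T then uvecP K I else 0)
      = (if T = K then 1 else 0)
        + (if T = Finset.univ then -(-1:ℝ)^((Finset.univ \ K).card) else 0) := by
  have hterm : ∀ I : Finset (Fin n), (if I ⊆ T then uvecP K I else 0)
      = (if I ⊆ T then uvec K I else 0)
        + (if I = Finset.univ
            then (if Finset.univ ⊆ T then -(-1:ℝ)^((Finset.univ \ K).card) else 0)
            else 0) := by
    intro I
    unfold uvecP uvec
    by_cases h1 : I = Finset.univ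
    · subst h1
      by_cases h2 : Finset.univ ⊆ T <;>
        simp [h2, Finset.subset_univ K]
    · simp [h1]
  rw [Finset.sum_congr rfl fun I _ => hterm I, Finset.sum_add_distrib, colsum]
  congr 1
  rw [Finset.sum_ite_eq' Finset.univ Finset.univ
    (fun _ => if Finset.univ ⊆ T then -(-1:ℝ)^((Finset.univ \ K).card) else 0)]
  simp only [Finset.mem_univ, if_true]
  by_cases h : T = Finset.univ
  · subst h; simp
  · rw [if_neg h, if_neg (fun hsub => h (Finset.univ_subset_iff.mp hsub))]

lemma pair_nonneg {w : Finset (Fin n) → ℝ} (h : (Mnm1 w).PosSemidef)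
    {K₁ K₂ : Finset (Fin n)} (h1 : K₁ ≠ Finset.univ) (hne : K₁ ≠ K₂) :
    0 ≤ mob w K₁ + mob w K₂ := by
  classical
  set e₁ : ℝ := (-1)^((Finset.univ \ K₁).card) with he₁def
  set e₂ : ℝ := (-1)^((Finset.univ \ K₂).card) with he₂def
  have he₁ : e₁ = 1 ∨ e₁ = -1 := by
    rcases Nat.even_or_odd ((Finset.univ \ K₁).card) with hp | hp
    · exact Or.inl (by rw [he₁def, hp.neg_one_pow])
    · exact Or.inr (by rw [he₁def, hp.neg_one_pow])
  have he₂ : e₂ = 1 ∨ e₂ = -1 := by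
    rcases Nat.even_or_odd ((Finset.univ \ K₂).card) with hp | hp
    · exact Or.inl (by rw [he₂def, hp.neg_one_pow])
    · exact Or.inr (by rw [he₂def, hp.neg_one_pow])
  set V : Finset (Fin n) → ℝ := fun I => uvecP K₁ I + (-(e₁*e₂)) * uvecP K₂ I with hVdef
  have hV : V Finset.univ = 0 := by simp [hVdef, uvecP]
  have hq := psd_quad h V hV
  have hsplit : ∀ T : Finset (Fin n),
      (∑ I : Finset (Fin n), if I ⊆ T then V I else 0)
        = (∑ I : Finset (Fin n), if I ⊆ T then uvecP K₁ I else 0)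
          + (-(e₁*e₂)) * (∑ I : Finset (Fin n), if I ⊆ T then uvecP K₂ I else 0) := by
    intro T
    rw [Finset.mul_sum, ← Finset.sum_add_distrib]
    refine Finset.sum_congr rfl fun I _ => ?_
    rw [hVdef]
    split_ifs with hc <;> ring
  have s1 : e₁ * e₁ = 1 := by rcases he₁ with hh | hh <;> rw [hh] <;> norm_num
  have s2 : e₂ * e₂ = 1 := by rcases he₂ with hh | hh <;> rw [hh] <;> norm_num
  have key : ∀ T : Finset (Fin n),
      mob w T * (∑ I : Finset (Fin n), if I ⊆ T then V I else 0)^2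
        = (if T = K₁ then mob w T else 0) + (if T = K₂ then mob w T else 0) := by
    intro T
    rw [hsplit T]
    by_cases h2 : K₂ = Finset.univ
    · have hz : (∑ I : Finset (Fin n), if I ⊆ T then uvecP K₂ I else 0) = 0 := by
        rw [h2]
        simp [uvecP_univ]
      rw [hz, mul_zero, add_zero, sigmaP K₁ T h1]
      subst h2
      split_ifs with c1 c2 c3 <;>
        first
          | ring1
          | (exact absurd (c1.symm.trans c2) h1)
          | (exact absurd (c1.symm.trans c3) h1)
          | (exact absurd (c2.symm.trans c3) h1)
          | linear_combination mob w T * s1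
    · rw [sigmaP K₁ T h1, sigmaP K₂ T h2, ← he₁def, ← he₂def]
      split_ifs with c1 c2 c3 <;>
        first
          | ring1
          | (exact absurd (c1.symm.trans c2) h1)
          | (exact absurd (c1.symm.trans c3) hne)
          | (exact absurd (c3.symm.trans c2) h2)
          | (exact absurd (c2.symm.trans c3) h2)
          | (exact absurd (‹T = K₂›.symm.trans ‹T = Finset.univ›) h2)
          | (exact absurd (c1.symm.trans ‹T = K₂›) hne)
          | linear_combination (mob w T * e₁ * e₁ * (e₂ * e₂ - 1)) * s2
          | linear_combination (mob w T * e₂ * e₂) * s1 + mob w T * s2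
          | linear_combination mob w T * s1
  rw [Finset.sum_congr rfl fun T _ => key T, Finset.sum_add_distrib] at hq
  rw [Finset.sum_ite_eq' Finset.univ K₁ (fun T => mob w T),
    Finset.sum_ite_eq' Finset.univ K₂ (fun T => mob w T)] at hq
  simpa using hq

end SVCaux

/-- If a 0/1 integer linear program (with `m ≥ 1` non-redundant affine constraints and
an optimal integral feasible point `Istar`) admits a feasible `Las_{n-1}` solution `y`
of value smaller than the integral optimum, then every constraint is Single Vertex
Cutting: exactly one 0/1 point violates it, and it is strictly positive elsewhere. -/
theorem gap_implies_svc_constraints (n m : ℕ) (hn : 1 ≤ n) (hm : 1 ≤ m)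
    (c : Fin n → ℝ) (c0 : ℝ)
    (a : Fin m → Fin n → ℝ) (b : Fin m → ℝ)
    (hnonred : ∀ ℓ : Fin m, ∃ I : Finset (Fin n), gval (a ℓ) (b ℓ) I < 0)
    (Istar : Finset (Fin n))
    (hIstar_feas : ∀ ℓ : Fin m, 0 ≤ gval (a ℓ) (b ℓ) Istar)
    (hIstar_opt : ∀ I : Finset (Fin n), (∀ ℓ : Fin m, 0 ≤ gval (a ℓ) (b ℓ) I) →
      gval c c0 Istar ≤ gval c c0 I)
    (y : Finset (Fin n) → ℝ)
    (hy0 : y ∅ = 1)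
    (hyPSD : (Mfull y).PosSemidef)
    (hyPSDg : ∀ ℓ : Fin m, (Mnm1 (shiftVec (a ℓ) (b ℓ) y)).PosSemidef)
    (hgap : ∑ I : Finset (Fin n), mob y I * gval c c0 I < gval c c0 Istar) :
    ∀ ℓ : Fin m, ∃ I : Finset (Fin n),
      gval (a ℓ) (b ℓ) I < 0 ∧
      ∀ J : Finset (Fin n), J ≠ I → 0 < gval (a ℓ) (b ℓ) J := by
  intro ℓ
  have hlam : ∀ K : Finset (Fin n), 0 ≤ mob y K := SVCaux.mob_nonneg hyPSD
  have hsum : (∑ K : Finset (Fin n), mob y K) = 1 := by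
    rw [SVCaux.sum_mob y, hy0]
  have hpair : ∀ (ℓ' : Fin m) (K₁ K₂ : Finset (Fin n)), K₁ ≠ K₂ →
      0 ≤ gval (a ℓ') (b ℓ') K₁ * mob y K₁ + gval (a ℓ') (b ℓ') K₂ * mob y K₂ := by
    intro ℓ' K₁ K₂ hne
    have hps := hyPSDg ℓ'
    by_cases h1 : K₁ = Finset.univ
    · have h2 : K₂ ≠ Finset.univ := fun hK => hne (h1.trans hK.symm)
      have hres := SVCaux.pair_nonneg hps h2 hne.symm
      rw [SVCaux.mob_shift, SVCaux.mob_shift] at hres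
      unfold gval
      linarith
    · have hres := SVCaux.pair_nonneg hps h1 hne
      rw [SVCaux.mob_shift, SVCaux.mob_shift] at hres
      unfold gval
      linarith
  have hbad : ∃ K₀ : Finset (Fin n), 0 < mob y K₀ ∧
      ∃ ℓ₀ : Fin m, gval (a ℓ₀) (b ℓ₀) K₀ < 0 := by
    by_contra hcon
    push_neg at hcon
    have hge : gval c c0 Istar ≤ ∑ I : Finset (Fin n), mob y I * gval c c0 I := by
      have h1 : gval c c0 Istar = ∑ I : Finset (Fin n), mob y I * gval c c0 Istar := by
        rw [← Finset.sum_mul, hsum, one_mul]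
      rw [h1]
      apply Finset.sum_le_sum
      intro I _
      rcases (hlam I).eq_or_lt with h0 | h0
      · rw [← h0, zero_mul, zero_mul]
      · exact mul_le_mul_of_nonneg_left (hIstar_opt I (hcon I h0)) (le_of_lt h0)
    linarith
  obtain ⟨K₀, hK₀pos, ℓ₀, hK₀neg⟩ := hbad
  have hallpos : ∀ K : Finset (Fin n), 0 < mob y K := by
    intro K
    rcases eq_or_ne K K₀ with rfl | hne
    · exact hK₀pos
    · have hp := hpair ℓ₀ K K₀ hne
      have hneg : gval (a ℓ₀) (b ℓ₀) K₀ * mob y K₀ < 0 :=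
        mul_neg_of_neg_of_pos hK₀neg hK₀pos
      have hKpos : 0 < gval (a ℓ₀) (b ℓ₀) K * mob y K := by linarith
      rcases (hlam K).eq_or_lt with h0 | h0
      · rw [← h0, mul_zero] at hKpos
        exact absurd hKpos (lt_irrefl 0)
      · exact h0
  obtain ⟨I, hI⟩ := hnonred ℓ
  refine ⟨I, hI, fun J hJ => ?_⟩
  have hp := hpair ℓ J I hJ
  have hneg : gval (a ℓ) (b ℓ) I * mob y I < 0 :=
    mul_neg_of_neg_of_pos hI (hallpos I)
  have hpos : 0 < gval (a ℓ) (b ℓ) J * mob y J := by linarith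
  by_contra hle
  push_neg at hle
  nlinarith [hallpos J, hle, hpos]
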